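/- arXiv:1910.02508 — 3 statements merged into one kernel-verified Lean document; each statement's English description precedes it below -/
import Mathlib

section
/- Let (X, W) be a metric space, ℰ : X → (-∞, +∞] lower semicontinuous, and for x₀ ∈ X and t > 0 let x_t be a minimizer of x ↦ (1/(2t)) W(x, x₀)² + ℰ(x). Define f(t) to be this minimal value. Then for 0 < s < t, f(t) - f(s) ≤ ((s - t)/(2st)) W(x_s, x₀)²; consequently f is locally Lipschitz on any interval where minimizers exist, with f'(t) = -(1/(2t²)) W(x_t, x₀)² for almost every t. -/
open MeasureTheory Filter Set

set_option maxHeartbeats 1600000 in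
/-- monotonicity of the minimal value of De Giorgi's variational
interpolation: `f(t) - f(s) ≤ ((s-t)/(2st)) W(x_s, x₀)²` for `0 < s < t`; hence `f`
is locally Lipschitz on `(0, ∞)` and `f'(t) = -(1/(2t²)) W(x_t, x₀)²` a.e. -/
theorem de_giorgi_value_monotonicity {X : Type*} [MetricSpace X]
    (ℰ : X → ℝ) (x₀ : X) (xsel : ℝ → X)
    (hmin : ∀ t > (0:ℝ), ∀ y : X,
      (1 / (2 * t)) * (dist (xsel t) x₀) ^ 2 + ℰ (xsel t)
        ≤ (1 / (2 * t)) * (dist y x₀) ^ 2 + ℰ y) :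
    (∀ s t : ℝ, 0 < s → s < t →
      ((1 / (2 * t)) * (dist (xsel t) x₀) ^ 2 + ℰ (xsel t))
          - ((1 / (2 * s)) * (dist (xsel s) x₀) ^ 2 + ℰ (xsel s))
        ≤ ((s - t) / (2 * s * t)) * (dist (xsel s) x₀) ^ 2)
    ∧ (∀ a b : ℝ, 0 < a → a < b → ∃ K : NNReal,
        LipschitzOnWith K
          (fun t => (1 / (2 * t)) * (dist (xsel t) x₀) ^ 2 + ℰ (xsel t))
          (Set.Icc a b))
    ∧ (∀ᵐ t ∂(volume.restrict (Set.Ioi (0:ℝ))),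
        HasDerivAt (fun τ => (1 / (2 * τ)) * (dist (xsel τ) x₀) ^ 2 + ℰ (xsel τ))
          (-(1 / (2 * t ^ 2)) * (dist (xsel t) x₀) ^ 2) t) := by
  classical
  -- key one-sided estimate
  have key : ∀ s t : ℝ, 0 < s → 0 < t →
      ((1 / (2 * t)) * (dist (xsel t) x₀) ^ 2 + ℰ (xsel t))
          - ((1 / (2 * s)) * (dist (xsel s) x₀) ^ 2 + ℰ (xsel s))
        ≤ (1 / (2 * t) - 1 / (2 * s)) * (dist (xsel s) x₀) ^ 2 := by
    intro s t hs ht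
    have h := hmin t ht (xsel s)
    nlinarith [h]
  refine ⟨?_, ?_, ?_⟩
  · -- Part 1
    intro s t hs hst
    have ht : 0 < t := hs.trans hst
    have hco : (s - t) / (2 * s * t) = 1 / (2 * t) - 1 / (2 * s) := by
      field_simp
    rw [hco]
    exact key s t hs ht
  · -- Part 2: local Lipschitz
    intro a b ha hab
    have hb : 0 < b := ha.trans hab
    obtain ⟨C, hC⟩ : ∃ C : ℝ, C = ℰ x₀ - ((1 / (2 * (2 * b))) * (dist (xsel (2 * b)) x₀) ^ 2
        + ℰ (xsel (2 * b))) := ⟨_, rfl⟩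
    have hb2 : (0:ℝ) < 2 * b := by linarith
    have hCnn : 0 ≤ C := by
      have h := hmin (2 * b) hb2 x₀
      simp only [dist_self] at h
      rw [hC]
      nlinarith [h]
    have hbound : ∀ t ∈ Set.Icc a b, (dist (xsel t) x₀) ^ 2 ≤ 4 * b * C := by
      intro t htI
      have ht : 0 < t := lt_of_lt_of_le ha htI.1
      have h1 := hmin t ht x₀
      simp only [dist_self] at h1
      have h2 := hmin (2 * b) hb2 (xsel t)
      have h3 : 1 / (2 * b) ≤ 1 / (2 * t) := by
        apply one_div_le_one_div_of_le <;> nlinarith [htI.2]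
      have hd := sq_nonneg (dist (xsel t) x₀)
      have h3' := mul_le_mul_of_nonneg_right h3 hd
      have h5 : 1 / (2 * (2 * b)) * dist (xsel t) x₀ ^ 2 ≤ C := by
        rw [hC]
        have h7 : 1 / (2 * b) * dist (xsel t) x₀ ^ 2
            - 1 / (2 * (2 * b)) * dist (xsel t) x₀ ^ 2
            = 1 / (2 * (2 * b)) * dist (xsel t) x₀ ^ 2 := by field_simp; ring
        nlinarith [h1, h2, h3', h7]
      have h8 : (4 * b) * (1 / (2 * (2 * b)) * dist (xsel t) x₀ ^ 2)
          = dist (xsel t) x₀ ^ 2 := by field_simp; ring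
      have h9 := mul_le_mul_of_nonneg_left h5 (by linarith : (0:ℝ) ≤ 4 * b)
      calc dist (xsel t) x₀ ^ 2 = 4 * b * (1 / (2 * (2 * b)) * dist (xsel t) x₀ ^ 2) :=
            h8.symm
        _ ≤ 4 * b * C := h9
    obtain ⟨c, hc⟩ : ∃ c : ℝ, c = 4 * b * C / (2 * a ^ 2) := ⟨_, rfl⟩
    have hcnn : 0 ≤ c := by
      rw [hc]
      apply div_nonneg (mul_nonneg (by linarith) hCnn) (by positivity)
    refine ⟨Real.toNNReal c, LipschitzOnWith.of_dist_le_mul ?_⟩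
    have step : ∀ u ∈ Set.Icc a b, ∀ v ∈ Set.Icc a b, u ≤ v →
        |((1 / (2 * v)) * (dist (xsel v) x₀) ^ 2 + ℰ (xsel v))
          - ((1 / (2 * u)) * (dist (xsel u) x₀) ^ 2 + ℰ (xsel u))| ≤ c * (v - u) := by
      intro u huI v hvI huv
      have hu : 0 < u := lt_of_lt_of_le ha huI.1
      have hv : 0 < v := lt_of_lt_of_le ha hvI.1
      have k1 := key u v hu hv
      have k2 := key v u hv hu
      have hcoef1 : 1 / (2 * v) - 1 / (2 * u) ≤ 0 := by
        have := one_div_le_one_div_of_le (by linarith : (0:ℝ) < 2 * u)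
          (by linarith : 2 * u ≤ 2 * v)
        linarith
      have hup : ((1 / (2 * v)) * (dist (xsel v) x₀) ^ 2 + ℰ (xsel v))
          - ((1 / (2 * u)) * (dist (xsel u) x₀) ^ 2 + ℰ (xsel u)) ≤ c * (v - u) := by
        have h0 : (1 / (2 * v) - 1 / (2 * u)) * (dist (xsel u) x₀) ^ 2 ≤ 0 :=
          mul_nonpos_of_nonpos_of_nonneg hcoef1 (sq_nonneg _)
        have : 0 ≤ c * (v - u) := mul_nonneg hcnn (by linarith)
        linarith
      have hdown : ((1 / (2 * u)) * (dist (xsel u) x₀) ^ 2 + ℰ (xsel u))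
          - ((1 / (2 * v)) * (dist (xsel v) x₀) ^ 2 + ℰ (xsel v)) ≤ c * (v - u) := by
        -- k2 : f u - f v ≤ (1/(2u) - 1/(2v)) * d v
        have hco : 1 / (2 * u) - 1 / (2 * v) = (v - u) / (2 * u * v) := by
          field_simp
        have hdv := hbound v hvI
        have hdvnn : (0:ℝ) ≤ (dist (xsel v) x₀) ^ 2 := sq_nonneg _
        have hden : (v - u) / (2 * u * v) ≤ (v - u) / (2 * a ^ 2) := by
          apply div_le_div_of_nonneg_left (by linarith) (by nlinarith [pow_pos ha 2])
          nlinarith [huI.1, hvI.1]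
        have h5 : (1 / (2 * u) - 1 / (2 * v)) * (dist (xsel v) x₀) ^ 2
            ≤ (v - u) / (2 * a ^ 2) * (4 * b * C) := by
          rw [hco]
          apply mul_le_mul hden hdv hdvnn
          exact div_nonneg (by linarith) (by positivity)
        have h6 : (v - u) / (2 * a ^ 2) * (4 * b * C) = c * (v - u) := by
          rw [hc]; ring
        linarith
      rw [abs_le]
      constructor <;> linarith
    intro x hx y hy
    rw [Real.dist_eq, Real.dist_eq, Real.coe_toNNReal _ hcnn]
    rcases le_total x y with h | h
    · rw [show |x - y| = y - x by rw [abs_sub_comm]; exact abs_of_nonneg (by linarith)]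
      rw [abs_sub_comm]
      exact step x hx y hy h
    · rw [show |x - y| = x - y from abs_of_nonneg (by linarith)]
      exact step y hy x hx h
  · -- Part 3: a.e. derivative
    have dmono : ∀ s t : ℝ, 0 < s → s ≤ t →
        (dist (xsel s) x₀) ^ 2 ≤ (dist (xsel t) x₀) ^ 2 := by
      intro s t hs hst
      rcases eq_or_lt_of_le hst with rfl | h
      · exact le_rfl
      have ht : 0 < t := hs.trans h
      have h1 := hmin s hs (xsel t)
      have h2 := hmin t ht (xsel s)
      have hcgap : 1 / (2 * t) < 1 / (2 * s) := by
        apply one_div_lt_one_div_of_lt <;> linarith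
      by_contra hcon
      push_neg at hcon
      have hp : 0 < (1 / (2 * s) - 1 / (2 * t))
          * ((dist (xsel s) x₀) ^ 2 - (dist (xsel t) x₀) ^ 2) :=
        mul_pos (by linarith) (by linarith)
      nlinarith [h1, h2, hp]
    have hclamp : ∀ n : ℕ, Monotone
        (fun t : ℝ => (dist (xsel (max t (1 / (n + 1)))) x₀) ^ 2) := by
      intro n t1 t2 h12
      have hpos : (0:ℝ) < 1 / ((n:ℝ) + 1) := by positivity
      exact dmono _ _ (hpos.trans_le (le_max_right _ _)) (max_le_max h12 le_rfl)
    obtain ⟨B, hB⟩ : ∃ B : Set ℝ, B = ⋃ n : ℕ,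
        {t | ¬ ContinuousAt (fun t : ℝ => (dist (xsel (max t (1 / (n + 1)))) x₀) ^ 2) t} :=
      ⟨_, rfl⟩
    have hBc : B.Countable := by
      rw [hB]
      exact Set.countable_iUnion fun n => (hclamp n).countable_not_continuousAt
    have hB0 : volume B = 0 := hBc.measure_zero _
    rw [ae_restrict_iff' measurableSet_Ioi]
    filter_upwards [measure_eq_zero_iff_ae_notMem.mp hB0] with t htB ht
    rw [Set.mem_Ioi] at ht
    simp only [hB, Set.mem_iUnion, Set.mem_setOf_eq, not_exists, not_not] at htB
    obtain ⟨n, hn⟩ := exists_nat_one_div_lt ht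
    have hcont : ContinuousAt (fun τ : ℝ => (dist (xsel τ) x₀) ^ 2) t := by
      have h1 := htB n
      have heq : (fun τ : ℝ => (dist (xsel (max τ (1 / (n + 1)))) x₀) ^ 2)
          =ᶠ[nhds t] (fun τ : ℝ => (dist (xsel τ) x₀) ^ 2) := by
        filter_upwards [isOpen_Ioi.mem_nhds (show t ∈ Set.Ioi (1 / ((n:ℝ) + 1)) from hn)]
          with τ hτ
        rw [Set.mem_Ioi] at hτ
        rw [max_eq_left hτ.le]
      exact h1.congr heq
    rw [hasDerivAt_iff_tendsto_slope]
    have hden : (2 : ℝ) * t * t ≠ 0 := by positivity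
    have hg1 : Tendsto (fun s : ℝ => -((dist (xsel s) x₀) ^ 2) / (2 * s * t)) (nhdsWithin t {t}ᶜ)
        (nhds (-(1 / (2 * t ^ 2)) * (dist (xsel t) x₀) ^ 2)) := by
      have hden' : ContinuousAt (fun s : ℝ => 2 * s * t) t := by fun_prop
      have h : ContinuousAt (fun s : ℝ => -((dist (xsel s) x₀) ^ 2) / (2 * s * t)) t :=
        hcont.neg.div hden' hden
      have h2 := h.tendsto
      rw [show -((dist (xsel t) x₀) ^ 2) / (2 * t * t)
        = -(1 / (2 * t ^ 2)) * (dist (xsel t) x₀) ^ 2 by ring] at h2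
      exact h2.mono_left nhdsWithin_le_nhds
    have hg2 : Tendsto (fun s : ℝ => -((dist (xsel t) x₀) ^ 2) / (2 * s * t)) (nhdsWithin t {t}ᶜ)
        (nhds (-(1 / (2 * t ^ 2)) * (dist (xsel t) x₀) ^ 2)) := by
      have hden' : ContinuousAt (fun s : ℝ => 2 * s * t) t := by fun_prop
      have h : ContinuousAt (fun s : ℝ => -((dist (xsel t) x₀) ^ 2) / (2 * s * t)) t :=
        continuousAt_const.div hden' hden
      have h2 := h.tendsto
      rw [show -((dist (xsel t) x₀) ^ 2) / (2 * t * t)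
        = -(1 / (2 * t ^ 2)) * (dist (xsel t) x₀) ^ 2 by ring] at h2
      exact h2.mono_left nhdsWithin_le_nhds
    have hminT := hg1.min hg2
    have hmaxT := hg1.max hg2
    rw [min_self] at hminT
    rw [max_self] at hmaxT
    have hevpos : ∀ᶠ s in nhdsWithin t {t}ᶜ, 0 < s ∧ s ≠ t := by
      filter_upwards [mem_nhdsWithin_of_mem_nhds (isOpen_Ioi.mem_nhds ht),
        self_mem_nhdsWithin] with s hs1 hs2
      exact ⟨hs1, hs2⟩
    apply tendsto_of_tendsto_of_tendsto_of_le_of_le' hminT hmaxT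
    · -- lower bound
      filter_upwards [hevpos] with s hs
      obtain ⟨hs0, hsne⟩ := hs
      have hA := hmin s hs0 (xsel t)
      have hB' := hmin t ht (xsel s)
      rw [slope_def_field]
      rcases lt_or_gt_of_ne hsne with hlt | hgt
      · refine le_trans (min_le_right _ _) ?_
        rw [le_div_iff_of_neg (by linarith : s - t < 0)]
        have hco : -((dist (xsel t) x₀) ^ 2) / (2 * s * t) * (s - t)
            = (1 / (2 * s) - 1 / (2 * t)) * (dist (xsel t) x₀) ^ 2 := by
          field_simp; ring
        rw [hco]
        linarith [hA]
      · refine le_trans (min_le_left _ _) ?_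
        rw [le_div_iff₀ (by linarith : (0:ℝ) < s - t)]
        have hco : -((dist (xsel s) x₀) ^ 2) / (2 * s * t) * (s - t)
            = (1 / (2 * s) - 1 / (2 * t)) * (dist (xsel s) x₀) ^ 2 := by
          field_simp; ring
        rw [hco]
        linarith [hB']
    · -- upper bound
      filter_upwards [hevpos] with s hs
      obtain ⟨hs0, hsne⟩ := hs
      have hA := hmin s hs0 (xsel t)
      have hB' := hmin t ht (xsel s)
      rw [slope_def_field]
      rcases lt_or_gt_of_ne hsne with hlt | hgt
      · refine le_trans ?_ (le_max_left _ _)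
        rw [div_le_iff_of_neg (by linarith : s - t < 0)]
        have hco : -((dist (xsel s) x₀) ^ 2) / (2 * s * t) * (s - t)
            = (1 / (2 * s) - 1 / (2 * t)) * (dist (xsel s) x₀) ^ 2 := by
          field_simp; ring
        rw [hco]
        linarith [hB']
      · refine le_trans ?_ (le_max_right _ _)
        rw [div_le_iff₀ (by linarith : (0:ℝ) < s - t)]
        have hco : -((dist (xsel t) x₀) ^ 2) / (2 * s * t) * (s - t)
            = (1 / (2 * s) - 1 / (2 * t)) * (dist (xsel t) x₀) ^ 2 := by
          field_simp; ring
        rw [hco]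
        linarith [hA]
end

section
/- Let ℰ be lower semicontinuous on a metric space (X, W), let x₀ ∈ X with ℰ(x₀) < ∞, and for t ∈ (0, h] let x̃(t) minimize x ↦ (1/(2t)) W(x, x₀)² + ℰ(x), with x₁ := x̃(h). Assume x̃(t) → x₀ with respect to W as t ↓ 0. Then (h/2)(W(x₁, x₀)/h)² + (1/2) ∫₀ʰ (W(x̃(t), x₀)/t)² dt ≤ ℰ(x₀) - ℰ(x₁). -/
open MeasureTheory Set

lemma dg_inv_sq_integral {a b : ℝ} (ha : 0 < a) (hab : a ≤ b) :
    ∫ t in a..b, (t ^ 2)⁻¹ = 1 / a - 1 / b := by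
  have h0 : (0:ℝ) ∉ Set.uIcc a b := by
    rw [Set.uIcc_of_le hab, Set.mem_Icc]
    rintro ⟨h1, -⟩; linarith
  have key := integral_zpow (a := a) (b := b) (n := -2) (Or.inr ⟨by decide, h0⟩)
  have ha' : a ≠ 0 := ne_of_gt ha
  have hb' : b ≠ 0 := by intro hb0; rw [hb0] at hab; linarith
  rw [show (fun x : ℝ => (x ^ 2)⁻¹) = fun x : ℝ => x ^ (-2 : ℤ) by
    funext x; rw [zpow_neg, zpow_two, sq]]
  rw [key, show ((-2 : ℤ) + 1) = -1 by ring]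
  simp only [zpow_neg, zpow_one, Int.cast_neg, Int.cast_ofNat]
  field_simp
  ring

lemma dg_step {X : Type*} [MetricSpace X] (x₀ : X) (xt : ℝ → X) {h a b : ℝ}
    (ha : 0 < a) (hab : a ≤ b) (hbh : b ≤ h)
    (dmono : ∀ s t : ℝ, 0 < s → s ≤ t → t ≤ h → dist (xt s) x₀ ≤ dist (xt t) x₀) :
    IntegrableOn (fun t => (dist (xt t) x₀ / t) ^ 2) (Ioc a b) ∧
    ∫ t in Ioc a b, (dist (xt t) x₀ / t) ^ 2
      ≤ dist (xt b) x₀ ^ 2 * (1 / a - 1 / b) := by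
  set D : ℝ → ℝ := fun t => dist (xt (max (min t b) a)) x₀ with hD
  have hclamp : ∀ t : ℝ, a ≤ max (min t b) a ∧ max (min t b) a ≤ b :=
    fun t => ⟨le_max_right _ _, max_le (min_le_right _ _) hab⟩
  have hDmono : Monotone D := by
    intro s t hst
    have h1 := hclamp s; have h2 := hclamp t
    exact dmono _ _ (lt_of_lt_of_le ha h1.1)
      (max_le_max (min_le_min hst le_rfl) le_rfl) (h2.2.trans hbh)
  have hDagree : ∀ t ∈ Ioc a b, D t = dist (xt t) x₀ := by
    intro t ht
    simp only [hD]
    rw [min_eq_left ht.2, max_eq_left ht.1.le]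
  have hφint : IntegrableOn (fun t : ℝ => dist (xt b) x₀ ^ 2 * (t ^ 2)⁻¹) (Ioc a b) := by
    apply ContinuousOn.integrableOn_Icc (by
      apply ContinuousOn.mul continuousOn_const
      apply ContinuousOn.inv₀ (continuousOn_pow 2)
      intro t ht
      have : 0 < t := lt_of_lt_of_le ha ht.1
      positivity) |>.mono_set Ioc_subset_Icc_self
  have hbound : ∀ t ∈ Ioc a b, (dist (xt t) x₀ / t) ^ 2 ≤ dist (xt b) x₀ ^ 2 * (t ^ 2)⁻¹ := by
    intro t ht
    have ht0 : 0 < t := lt_of_lt_of_le ha ht.1.le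
    rw [div_pow, div_eq_mul_inv]
    have : dist (xt t) x₀ ^ 2 ≤ dist (xt b) x₀ ^ 2 := by
      have := dmono t b ht0 ht.2 hbh
      exact pow_le_pow_left₀ dist_nonneg this 2
    exact mul_le_mul_of_nonneg_right this (by positivity)
  have hmeas : AEStronglyMeasurable (fun t => (dist (xt t) x₀ / t) ^ 2)
      (volume.restrict (Ioc a b)) := by
    have : Measurable (fun t : ℝ => (D t / t) ^ 2) :=
      (hDmono.measurable.div measurable_id).pow_const 2
    refine this.aestronglyMeasurable.congr ?_
    filter_upwards [ae_restrict_mem measurableSet_Ioc] with t ht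
    rw [hDagree t ht]
  have hint : IntegrableOn (fun t => (dist (xt t) x₀ / t) ^ 2) (Ioc a b) := by
    refine hφint.mono' hmeas ?_
    filter_upwards [ae_restrict_mem measurableSet_Ioc] with t ht
    rw [Real.norm_of_nonneg (by positivity)]
    exact hbound t ht
  refine ⟨hint, ?_⟩
  calc ∫ t in Ioc a b, (dist (xt t) x₀ / t) ^ 2
      ≤ ∫ t in Ioc a b, dist (xt b) x₀ ^ 2 * (t ^ 2)⁻¹ :=
        setIntegral_mono_on hint hφint measurableSet_Ioc hbound
    _ = dist (xt b) x₀ ^ 2 * ∫ t in Ioc a b, (t ^ 2)⁻¹ := integral_const_mul _ _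
    _ = dist (xt b) x₀ ^ 2 * (1 / a - 1 / b) := by
        rw [← intervalIntegral.integral_of_le hab, dg_inv_sq_integral ha hab]

set_option maxHeartbeats 1600000 in
/-- one-step sharp energy-dissipation inequality for De Giorgi's
variational interpolation (cf. AGS, Theorem 3.1.4):
`(h/2)(W(x₁,x₀)/h)² + (1/2)∫₀ʰ (W(x̃(t),x₀)/t)² dt ≤ ℰ(x₀) - ℰ(x₁)`. -/
theorem de_giorgi_one_step_dissipation {X : Type*} [MetricSpace X]
    (ℰ : X → ℝ) (hlsc : LowerSemicontinuous ℰ)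
    (x₀ : X) (h : ℝ) (hh : 0 < h) (xt : ℝ → X)
    (hmin : ∀ t : ℝ, 0 < t → t ≤ h → ∀ y : X,
      (1 / (2 * t)) * (dist (xt t) x₀) ^ 2 + ℰ (xt t)
        ≤ (1 / (2 * t)) * (dist y x₀) ^ 2 + ℰ y)
    (hcont : Filter.Tendsto xt (nhdsWithin 0 (Set.Ioi 0)) (nhds x₀)) :
    (h / 2) * (dist (xt h) x₀ / h) ^ 2
        + (1 / 2) * ∫ t in Set.Ioc (0:ℝ) h, (dist (xt t) x₀ / t) ^ 2
      ≤ ℰ x₀ - ℰ (xt h) := by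
  -- monotonicity of t ↦ dist (xt t) x₀
  have dmono : ∀ s t : ℝ, 0 < s → s ≤ t → t ≤ h →
      dist (xt s) x₀ ≤ dist (xt t) x₀ := by
    intro s t hs hst hth
    rcases eq_or_lt_of_le hst with rfl | hlt
    · exact le_rfl
    have ht : 0 < t := hs.trans hlt
    have h1 := hmin s hs (hst.trans hth) (xt t)
    have h2 := hmin t ht hth (xt s)
    have hsq : dist (xt s) x₀ ^ 2 ≤ dist (xt t) x₀ ^ 2 := by
      by_contra hA
      push_neg at hA
      have hc : 1 / (2 * t) < 1 / (2 * s) :=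
        one_div_lt_one_div_of_lt (by linarith) (by linarith)
      have hm := mul_lt_mul_of_pos_right hc
        (by linarith : (0:ℝ) < dist (xt s) x₀ ^ 2 - dist (xt t) x₀ ^ 2)
      nlinarith [hm]
    exact (pow_le_pow_iff_left₀ dist_nonneg dist_nonneg two_ne_zero).mp hsq
  -- the minimized value
  obtain ⟨g, hg⟩ : ∃ g : ℝ → ℝ, g = fun t => (1 / (2 * t)) * dist (xt t) x₀ ^ 2 + ℰ (xt t) :=
    ⟨_, rfl⟩
  have gdrop : ∀ s t : ℝ, 0 < s → s ≤ t → t ≤ h →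
      dist (xt s) x₀ ^ 2 * (1 / (2 * s) - 1 / (2 * t)) ≤ g s - g t := by
    intro s t hs hst hth
    have h2 := hmin t (hs.trans_le hst) hth (xt s)
    simp only [hg]
    nlinarith [h2]
  have gle : ∀ t : ℝ, 0 < t → t ≤ h → g t ≤ ℰ x₀ := by
    intro t ht hth
    have := hmin t ht hth x₀
    simp only [dist_self] at this
    simp only [hg]
    nlinarith [this]
  obtain ⟨C, hC⟩ : ∃ C : ℝ, C = 2 * (ℰ x₀ - g h) := ⟨_, rfl⟩
  have hC0 : 0 ≤ C := by
    have := gle h hh le_rfl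
    simp only [hC]; linarith
  -- main estimate on (ε, h]
  have key : ∀ ε : ℝ, 0 < ε → ε < h →
      ∫ t in Ioc ε h, (dist (xt t) x₀ / t) ^ 2 ≤ C := by
    intro ε hε hεh
    have hbound : ∀ n : ℕ, 1 ≤ n →
        ∫ t in Ioc ε h, (dist (xt t) x₀ / t) ^ 2
          ≤ 2 * (g ε - g h) + ((h - ε) / n / ε ^ 2) *
              (dist (xt h) x₀ ^ 2 - dist (xt ε) x₀ ^ 2) := by
      intro n hn
      set δ : ℝ := (h - ε) / n with hδdef
      have hn0 : (0:ℝ) < n := by exact_mod_cast Nat.pos_of_ne_zero (by omega)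
      have hδ : 0 < δ := div_pos (by linarith) hn0
      have hnδ : (n:ℝ) * δ = h - ε := by rw [hδdef, mul_div_assoc', mul_div_cancel_left₀ _ hn0.ne']
      have hu : ∀ k : ℕ, k ≤ n → ε + k * δ ≤ h := by
        intro k hk
        have : (k:ℝ) * δ ≤ n * δ := by
          apply mul_le_mul_of_nonneg_right _ hδ.le
          exact_mod_cast hk
        linarith
      have ind : ∀ k : ℕ, k ≤ n →
          ∫ t in Ioc ε (ε + k * δ), (dist (xt t) x₀ / t) ^ 2
            ≤ 2 * (g ε - g (ε + k * δ)) + (δ / ε ^ 2) *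
                (dist (xt (ε + k * δ)) x₀ ^ 2 - dist (xt ε) x₀ ^ 2) := by
        intro k hk
        induction k with
        | zero => simp
        | succ k ih =>
          have hk' : k ≤ n := by omega
          have hak : 0 < ε + k * δ := by positivity
          have hab : ε + (k:ℝ) * δ ≤ ε + ((k:ℕ) + 1 : ℕ) * δ := by
            push_cast; nlinarith [hδ.le]
          have hbh' : ε + ((k:ℕ) + 1 : ℕ) * δ ≤ h := hu (k+1) hk
          have hstep := dg_step x₀ xt (h := h) hak hab hbh' dmono
          have hprev := ih hk'
          have hεa : ε ≤ ε + (k:ℝ) * δ := by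
            have : (0:ℝ) ≤ (k:ℝ) * δ := by positivity
            linarith
          have hsplit : Ioc ε (ε + ((k:ℕ)+1:ℕ) * δ)
              = Ioc ε (ε + (k:ℝ) * δ) ∪ Ioc (ε + (k:ℝ) * δ) (ε + ((k:ℕ)+1:ℕ) * δ) :=
            (Ioc_union_Ioc_eq_Ioc hεa hab).symm
          have hint1 := (dg_step x₀ xt (h := h) hε hεa (hu k hk') dmono).1
          rw [hsplit, setIntegral_union (Ioc_disjoint_Ioc_of_le le_rfl) measurableSet_Ioc hint1 hstep.1]
          have hd2 : dist (xt (ε + k * δ)) x₀ ≤ dist (xt (ε + ((k:ℕ)+1:ℕ) * δ)) x₀ :=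
            dmono _ _ hak hab hbh'
          have hgd := gdrop (ε + k * δ) (ε + ((k:ℕ)+1:ℕ) * δ) hak hab hbh'
          set A := ε + (k:ℝ) * δ with hA
          set B := ε + (((k:ℕ)+1:ℕ):ℝ) * δ with hB
          have hB0 : 0 < B := lt_of_lt_of_le hak hab
          have hBA : B - A = δ := by
            simp only [hA, hB]; push_cast; ring
          have hinv : 1 / A - 1 / B = δ / (A * B) := by
            rw [← hBA, div_sub_div _ _ hak.ne' hB0.ne']
            ring_nf
          have hinv2 : 1 / (2 * A) - 1 / (2 * B) = δ / (A * B) / 2 := by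
            rw [← hBA, div_sub_div _ _ (by positivity : (2*A) ≠ 0) (by positivity : (2*B) ≠ 0)]
            rw [div_div, div_eq_div_iff (by positivity) (by positivity)]
            ring
          have hABε : ε ^ 2 ≤ A * B := by nlinarith [hεa, hεa.trans hab, hε]
          have hfrac : δ / (A * B) ≤ δ / ε ^ 2 := by
            apply div_le_div_of_nonneg_left hδ.le (by positivity) hABε
          have e1 : dist (xt A) x₀ ^ 2 * (δ / (A * B)) ≤ 2 * (g A - g B) := by
            rw [hinv2] at hgd
            linarith
          have e2 : (dist (xt B) x₀ ^ 2 - dist (xt A) x₀ ^ 2) * (δ / (A * B))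
              ≤ (δ / ε ^ 2) * (dist (xt B) x₀ ^ 2 - dist (xt A) x₀ ^ 2) := by
            rw [mul_comm (δ / ε ^ 2)]
            apply mul_le_mul_of_nonneg_left hfrac
            nlinarith [hd2, dist_nonneg (x := xt A) (y := x₀)]
          have e3 : ∫ t in Ioc A B, (dist (xt t) x₀ / t) ^ 2
              ≤ dist (xt B) x₀ ^ 2 * (δ / (A * B)) := by
            rw [← hinv]; exact hstep.2
          linarith [hprev, e1, e2, e3]
      have hfin := ind n le_rfl
      have hεn : ε + n * δ = h := by linarith
      rw [hεn] at hfin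
      simpa only [hδdef] using hfin
    have hlim : Filter.Tendsto (fun n : ℕ => 2 * (g ε - g h) + ((h - ε) / n / ε ^ 2) *
        (dist (xt h) x₀ ^ 2 - dist (xt ε) x₀ ^ 2)) Filter.atTop
        (nhds (2 * (g ε - g h))) := by
      have t1 : Filter.Tendsto (fun n : ℕ => (h - ε) / n) Filter.atTop (nhds 0) :=
        tendsto_const_div_atTop_nhds_zero_nat _
      have t2 := ((t1.div_const (ε ^ 2)).mul_const
        (dist (xt h) x₀ ^ 2 - dist (xt ε) x₀ ^ 2)).const_add (2 * (g ε - g h))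
      simpa using t2
    have h2 : ∫ t in Ioc ε h, (dist (xt t) x₀ / t) ^ 2 ≤ 2 * (g ε - g h) :=
      ge_of_tendsto hlim (Filter.eventually_atTop.2 ⟨1, fun n hn => hbound n hn⟩)
    have := gle ε hε hεh.le
    simp only [hC]
    linarith
  -- integrability on `Ioc 0 h` and passage to the limit ε → 0
  set a : ℕ → ℝ := fun m => h / (m + 1) with ha
  have ham : ∀ m : ℕ, 0 < a m := fun m => div_pos hh (by positivity)
  have hah : ∀ m : ℕ, a m ≤ h := fun m => by
    apply div_le_self hh.le
    have : (0:ℝ) ≤ m := Nat.cast_nonneg m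
    linarith
  have hbm : ∀ m : ℕ, ∫ t in Ioc (a m) h, (dist (xt t) x₀ / t) ^ 2 ≤ C := by
    intro m
    rcases lt_or_eq_of_le (hah m) with hlt | heq
    · exact key (a m) (ham m) hlt
    · rw [heq, Ioc_self]
      simp [hC0]
  have hintm : ∀ m : ℕ, IntegrableOn (fun t => (dist (xt t) x₀ / t) ^ 2) (Ioc (a m) h) :=
    fun m => (dg_step x₀ xt (ham m) (hah m) le_rfl dmono).1
  have hatend : Filter.Tendsto a Filter.atTop (nhds 0) := by
    have t1 : Filter.Tendsto (fun n : ℕ => h / n) Filter.atTop (nhds 0) :=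
      tendsto_const_div_atTop_nhds_zero_nat _
    have t2 := t1.comp (Filter.tendsto_add_atTop_nat 1)
    have : (fun m : ℕ => h / ((m + 1 : ℕ) : ℝ)) = a := by
      funext m; simp [ha]
    rwa [← this]
  have hint0 : IntegrableOn (fun t => (dist (xt t) x₀ / t) ^ 2) (Ioc 0 h) := by
    apply integrableOn_Ioc_of_intervalIntegral_norm_bounded_left (I := C) hintm hatend
    filter_upwards with m
    have : (fun t => ‖(dist (xt t) x₀ / t) ^ 2‖) = fun t => (dist (xt t) x₀ / t) ^ 2 := by
      funext t; exact Real.norm_of_nonneg (by positivity)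
    rw [this]
    exact hbm m
  have htendint : Filter.Tendsto (fun m => ∫ t in Ioc (a m) h, (dist (xt t) x₀ / t) ^ 2)
      Filter.atTop (nhds (∫ t in Ioc (0:ℝ) h, (dist (xt t) x₀ / t) ^ 2)) := by
    have hU : ⋃ m : ℕ, Ioc (a m) h = Ioc (0:ℝ) h := by
      ext t
      simp only [mem_iUnion, mem_Ioc]
      constructor
      · rintro ⟨m, h1, h2⟩
        exact ⟨(ham m).trans h1, h2⟩
      · rintro ⟨ht0, hth⟩
        obtain ⟨m, hm⟩ := exists_nat_gt (h / t)
        refine ⟨m, ?_, hth⟩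
        rw [ha]
        rw [div_lt_iff₀ (by positivity)]
        rw [div_lt_iff₀ ht0] at hm
        nlinarith [ht0]
    have hmono : Monotone fun m : ℕ => Ioc (a m) h := by
      intro m m' hmm'
      apply Ioc_subset_Ioc_left
      apply div_le_div_of_nonneg_left hh.le (by positivity)
      have : (m:ℝ) ≤ (m':ℝ) := by exact_mod_cast hmm'
      linarith
    have := tendsto_setIntegral_of_monotone (fun m => measurableSet_Ioc) hmono (hU ▸ hint0)
    rwa [hU] at this
  have hfinal : ∫ t in Ioc (0:ℝ) h, (dist (xt t) x₀ / t) ^ 2 ≤ C :=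
    le_of_tendsto htendint (Filter.Eventually.of_forall hbm)
  have hrw : (h / 2) * (dist (xt h) x₀ / h) ^ 2 = 1 / (2 * h) * dist (xt h) x₀ ^ 2 := by
    field_simp
  have hghval : g h = 1 / (2 * h) * dist (xt h) x₀ ^ 2 + ℰ (xt h) := by rw [hg]
  rw [hrw]
  simp only [hC] at hfinal
  linarith [hfinal]
end

section
/- Let (X, W) be a metric space and ℰ : X → (-∞, +∞]. Define the local slope |∂ℰ|(x) := limsup_{y → x} (ℰ(x) - ℰ(y))₊ / W(x, y). If x̃ minimizes y ↦ (1/(2t)) W(y, x₀)² + ℰ(y), then |∂ℰ|(x̃) ≤ W(x̃, x₀)/t. -/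
open Filter Topology

/-- slope estimate for the resolvent of the minimizing movements
scheme (cf. AGS, Lemma 3.1.3): if `x̃` minimizes `y ↦ (1/(2t)) W(y,x₀)² + ℰ(y)`,
then the local slope satisfies `|∂ℰ|(x̃) ≤ W(x̃, x₀)/t`. -/
theorem slope_estimate_resolvent {X : Type*} [MetricSpace X]
    (ℰ : X → ℝ) (x₀ x' : X) (t : ℝ) (ht : 0 < t)
    (hmin : ∀ y : X,
      (1 / (2 * t)) * (dist x' x₀) ^ 2 + ℰ x'
        ≤ (1 / (2 * t)) * (dist y x₀) ^ 2 + ℰ y) :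
    limsup (fun y => max (ℰ x' - ℰ y) 0 / dist x' y) (nhdsWithin x' {x'}ᶜ)
      ≤ dist x' x₀ / t := by
  set L := nhdsWithin x' {x'}ᶜ with hL
  have hdt : 0 ≤ dist x' x₀ / t := div_nonneg dist_nonneg ht.le
  rcases eq_or_neBot L with hbot | hne
  · rw [hbot, limsup, limsSup, map_bot]
    rw [show {a : ℝ | ∀ᶠ (n : ℝ) in ⊥, n ≤ a} = Set.univ by ext a; simp]
    rw [Real.sInf_of_not_bddBelow (by simpa using not_bddBelow_univ)]
    exact hdt
  · set g : X → ℝ := fun y => (dist y x₀ + dist x' x₀) / (2 * t) with hg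
    have hfg : ∀ᶠ y in L, max (ℰ x' - ℰ y) 0 / dist x' y ≤ g y := by
      filter_upwards [self_mem_nhdsWithin] with y hy
      have hyne : y ≠ x' := hy
      have hd : 0 < dist x' y := dist_pos.mpr (Ne.symm hyne)
      have h2t : 0 < 2 * t := by linarith
      have h1 : ℰ x' - ℰ y ≤ (1 / (2 * t)) * ((dist y x₀) ^ 2 - (dist x' x₀) ^ 2) := by
        have := hmin y
        have : ℰ x' - ℰ y ≤ (1 / (2 * t)) * (dist y x₀) ^ 2
            - (1 / (2 * t)) * (dist x' x₀) ^ 2 := by linarith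
        linarith [this]
      have h2 : (dist y x₀) ^ 2 - (dist x' x₀) ^ 2
          ≤ dist x' y * (dist y x₀ + dist x' x₀) := by
        have habs : dist y x₀ - dist x' x₀ ≤ dist x' y := by
          have := abs_dist_sub_le y x' x₀
          have h := abs_le.mp this
          calc dist y x₀ - dist x' x₀ ≤ dist y x' := h.2
            _ = dist x' y := dist_comm y x'
        have hsum : 0 ≤ dist y x₀ + dist x' x₀ := by positivity
        calc (dist y x₀) ^ 2 - (dist x' x₀) ^ 2
            = (dist y x₀ - dist x' x₀) * (dist y x₀ + dist x' x₀) := by ring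
          _ ≤ dist x' y * (dist y x₀ + dist x' x₀) :=
              mul_le_mul_of_nonneg_right habs hsum
      have h3 : max (ℰ x' - ℰ y) 0
          ≤ (1 / (2 * t)) * (dist x' y * (dist y x₀ + dist x' x₀)) := by
        apply max_le
        · calc ℰ x' - ℰ y ≤ _ := h1
            _ ≤ _ := by
              apply mul_le_mul_of_nonneg_left h2 (by positivity)
        · positivity
      rw [div_le_iff₀ hd]
      calc max (ℰ x' - ℰ y) 0
          ≤ (1 / (2 * t)) * (dist x' y * (dist y x₀ + dist x' x₀)) := h3
        _ = g y * dist x' y := by simp only [hg]; field_simp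
    have hgt : Tendsto g L (𝓝 (dist x' x₀ / t)) := by
      have hc : Tendsto g (𝓝 x') (𝓝 ((dist x' x₀ + dist x' x₀) / (2 * t))) := by
        apply Tendsto.div_const
        exact ((continuous_id.dist continuous_const).tendsto x').add tendsto_const_nhds
      have : (dist x' x₀ + dist x' x₀) / (2 * t) = dist x' x₀ / t := by
        field_simp; ring
      rw [this] at hc
      exact hc.mono_left nhdsWithin_le_nhds
    have hgl : limsup g L = dist x' x₀ / t := hgt.limsup_eq
    have hco : IsCoboundedUnder (· ≤ ·) L (fun y => max (ℰ x' - ℰ y) 0 / dist x' y) := by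
      apply IsCoboundedUnder.of_frequently_ge (a := 0)
      apply Eventually.frequently
      filter_upwards [self_mem_nhdsWithin] with y hy
      exact div_nonneg (le_max_right _ _) dist_nonneg
    calc limsup (fun y => max (ℰ x' - ℰ y) 0 / dist x' y) L ≤ limsup g L :=
          limsup_le_limsup hfg hco hgt.isBoundedUnder_le
      _ = dist x' x₀ / t := hgl
end
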